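/- Let I ⊆ ℝ be an interval and let T₀, T₁, T₂, T₃ : I → M_N(ℂ) be differentiable matrix-valued functions satisfying the Nahm equation dT_i/ds + [T₀, T_i] = (1/2) Σ_{j,k} ε_{ijk} [T_j, T_k] for i = 1, 2, 3. Then for every ζ ∈ ℂ the characteristic polynomial of i·T(ζ)(s), i.e. η ↦ det(η·I_N − i T(ζ)(s)), is independent of s ∈ I, where T(ζ) = (1/2)(T₁ + i T₂) + ζ T₃ − (1/2)(T₁ − i T₂) ζ². -/

import Mathlib

attribute [local instance] Matrix.normedAddCommGroup Matrix.normedSpace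

/-- The Levi-Civita symbol `ε_{ijk}` on indices in `Fin 3` (with `ε₀₁₂ = 1`). -/
def eps (i j k : Fin 3) : ℤ :=
  (((j : ℕ) : ℤ) - ((i : ℕ) : ℤ)) * (((k : ℕ) : ℤ) - ((i : ℕ) : ℤ))
    * (((k : ℕ) : ℤ) - ((j : ℕ) : ℤ)) / 2

/-- `T(ζ) = (1/2)(T₁ + i T₂) + ζ T₃ − (1/2)(T₁ − i T₂) ζ²`
(spatial Nahm matrices indexed by `Fin 3`, so `T 0 = T₁` etc.). -/
noncomputable def Tz {N : ℕ} (T : Fin 3 → ℝ → Matrix (Fin N) (Fin N) ℂ) (ζ : ℂ) (s : ℝ) :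
    Matrix (Fin N) (Fin N) ℂ :=
  (1 / 2 : ℂ) • (T 0 s + Complex.I • T 1 s) + ζ • T 2 s
    - ((1 / 2 : ℂ) * ζ ^ 2) • (T 0 s - Complex.I • T 1 s)

section Aux

variable {N : ℕ}

/-- `det` of an update of one row, as a linear map in the new row. -/
noncomputable def rowDet (A : Matrix (Fin N) (Fin N) ℂ) (j : Fin N) :
    (Fin N → ℂ) →ₗ[ℂ] ℂ where
  toFun v := (A.updateRow j v).det
  map_add' u v := Matrix.det_updateRow_add A j u v
  map_smul' c v := Matrix.det_updateRow_smul A j c v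

lemma trace_adj_mul (A H : Matrix (Fin N) (Fin N) ℂ) :
    Matrix.trace (A.adjugate * H) = ∑ j, (A.updateRow j (H j)).det := by
  have h1 : ∀ j, (A.updateRow j (H j)).det
      = ∑ k, H j k * (A.updateRow j (Pi.single k 1)).det := by
    intro j
    have hv : H j = ∑ k, H j k • (Pi.single k 1 : Fin N → ℂ) := by
      ext b; simp [Pi.single_apply]
    have : (A.updateRow j (H j)).det
        = rowDet A j (∑ k, H j k • (Pi.single k 1 : Fin N → ℂ)) := by
      rw [← hv]; rfl
    rw [this, map_sum]
    simp [rowDet]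
  simp only [Matrix.trace, Matrix.diag, Matrix.mul_apply, Matrix.adjugate_apply, h1]
  rw [Finset.sum_comm]
  congr 1; ext j; congr 1; ext k; ring

lemma sum_updateRow_det (A H : Matrix (Fin N) (Fin N) ℂ) :
    ∑ r, (A.updateRow r (H r)).det =
      ∑ σ : Equiv.Perm (Fin N), ((Equiv.Perm.sign σ : ℤ) : ℂ) *
        ∑ i, (∏ j ∈ Finset.univ.erase i, A (σ j) j) • H (σ i) i := by
  simp only [Matrix.det_apply']
  rw [Finset.sum_comm]
  refine Finset.sum_congr rfl fun σ _ => ?_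
  rw [← Finset.mul_sum]
  congr 1
  rw [← Equiv.sum_comp σ (fun r => ∏ i, (A.updateRow r (H r)) (σ i) i)]
  refine Finset.sum_congr rfl fun i₀ _ => ?_
  have hupd : ∀ i, (A.updateRow (σ i₀) (H (σ i₀))) (σ i) i
      = Function.update (fun i => A (σ i) i) i₀ (H (σ i₀) i₀) i := by
    intro i
    rcases eq_or_ne i i₀ with rfl | hne
    · simp [Matrix.updateRow_apply]
    · simp [Matrix.updateRow_apply, Function.update_of_ne hne,
        (Equiv.injective σ).ne hne]
  rw [Finset.prod_congr rfl fun i _ => hupd i,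
    Finset.prod_update_of_mem (Finset.mem_univ i₀), smul_eq_mul, mul_comm,
    Finset.erase_eq]

/-- Jacobi's formula, `HasDerivWithinAt` version. -/
lemma hasDerivWithinAt_det {M : ℝ → Matrix (Fin N) (Fin N) ℂ}
    {A' : Matrix (Fin N) (Fin N) ℂ} {I : Set ℝ} {s : ℝ}
    (h : ∀ a b, HasDerivWithinAt (fun t => M t a b) (A' a b) I s) :
    HasDerivWithinAt (fun t => (M t).det)
      (Matrix.trace ((M s).adjugate * A')) I s := by
  have key : HasDerivWithinAt (fun t => ∑ σ : Equiv.Perm (Fin N),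
        ((Equiv.Perm.sign σ : ℤ) : ℂ) * ∏ i, M t (σ i) i)
      (∑ σ : Equiv.Perm (Fin N), ((Equiv.Perm.sign σ : ℤ) : ℂ) *
        ∑ i, (∏ j ∈ Finset.univ.erase i, M s (σ j) j) • A' (σ i) i) I s := by
    apply HasDerivWithinAt.fun_sum
    intro σ _
    exact (HasDerivWithinAt.fun_finsetProd (fun i _ => h (σ i) i)).const_mul _
  have e1 : Matrix.trace ((M s).adjugate * A')
      = ∑ σ : Equiv.Perm (Fin N), ((Equiv.Perm.sign σ : ℤ) : ℂ) *
        ∑ i, (∏ j ∈ Finset.univ.erase i, M s (σ j) j) • A' (σ i) i := by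
    rw [trace_adj_mul, sum_updateRow_det]
  rw [e1]
  convert key using 1
  ext t
  rw [Matrix.det_apply']

lemma trace_adj_comm (A B : Matrix (Fin N) (Fin N) ℂ) :
    Matrix.trace (A.adjugate * (A * B - B * A)) = 0 := by
  rw [Matrix.mul_sub, Matrix.trace_sub, ← Matrix.mul_assoc, Matrix.adjugate_mul,
    ← Matrix.mul_assoc, Matrix.trace_mul_comm (A.adjugate * B) A, ← Matrix.mul_assoc,
    Matrix.mul_adjugate]
  simp [Matrix.smul_mul, Matrix.trace_smul]

/-- Entry evaluation commutes with `HasDerivWithinAt` for matrix-valued functions. -/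
lemma HasDerivWithinAt.matrix_entry {f : ℝ → Matrix (Fin N) (Fin N) ℂ}
    {F : Matrix (Fin N) (Fin N) ℂ} {I : Set ℝ} {s : ℝ}
    (h : HasDerivWithinAt f F I s) (a b : Fin N) :
    HasDerivWithinAt (fun t => f t a b) (F a b) I s := by
  let l : Matrix (Fin N) (Fin N) ℂ →ₗ[ℝ] ℂ :=
    { toFun := fun A => A a b, map_add' := fun _ _ => rfl, map_smul' := fun _ _ => rfl }
  exact (LinearMap.toContinuousLinearMap l).hasFDerivAt.comp_hasDerivWithinAt s h

end Aux

/-- If `T₀, T₁, T₂, T₃ : I → M_N(ℂ)` satisfy the Nahm equation on an interval `I`, then for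
every `ζ ∈ ℂ` the characteristic polynomial `η ↦ det(η·1 − i T(ζ)(s))` is independent of
`s ∈ I` (the spectral curve is conserved). -/
theorem spectral_curve_independent_of_s {N : ℕ} (I : Set ℝ) (hI : Convex ℝ I)
    (T₀ : ℝ → Matrix (Fin N) (Fin N) ℂ)
    (T T' : Fin 3 → ℝ → Matrix (Fin N) (Fin N) ℂ)
    (hT₀ : ∀ s ∈ I, DifferentiableWithinAt ℝ T₀ I s)
    (hT : ∀ (i : Fin 3), ∀ s ∈ I, HasDerivWithinAt (T i) (T' i s) I s)
    (hnahm : ∀ (i : Fin 3), ∀ s ∈ I,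
      T' i s + (T₀ s * T i s - T i s * T₀ s) =
        (1 / 2 : ℂ) • ∑ j : Fin 3, ∑ k : Fin 3,
          (eps i j k : ℂ) • (T j s * T k s - T k s * T j s)) :
    ∀ (ζ η : ℂ), ∀ s ∈ I, ∀ t ∈ I,
      (η • (1 : Matrix (Fin N) (Fin N) ℂ) - Complex.I • Tz T ζ s).det =
        (η • (1 : Matrix (Fin N) (Fin N) ℂ) - Complex.I • Tz T ζ t).det := by
  intro ζ η s hs t ht
  classical
  set B : ℝ → Matrix (Fin N) (Fin N) ℂ :=
    fun u => T₀ u - Complex.I • T 2 u + ζ • (Complex.I • T 0 u + T 1 u) with hB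
  set Z : ℝ → Matrix (Fin N) (Fin N) ℂ := fun u =>
    (1 / 2 : ℂ) • (T' 0 u + Complex.I • T' 1 u) + ζ • T' 2 u
      - ((1 / 2 : ℂ) * ζ ^ 2) • (T' 0 u - Complex.I • T' 1 u) with hZ
  -- derivative of `Tz`
  have hTz : ∀ u ∈ I, HasDerivWithinAt (fun v => Tz T ζ v) (Z u) I u := by
    intro u hu
    simp only [Tz, hZ]
    exact ((((hT 0 u hu).add ((hT 1 u hu).const_smul Complex.I)).const_smul
        ((1 / 2 : ℂ))).add ((hT 2 u hu).const_smul ζ)).sub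
      (((hT 0 u hu).sub ((hT 1 u hu).const_smul Complex.I)).const_smul ((1 / 2 : ℂ) * ζ ^ 2))
  -- Lax pair form of the Nahm equations
  have hlax : ∀ u ∈ I, Z u = Tz T ζ u * B u - B u * Tz T ζ u := by
    intro u hu
    have h0 := hnahm 0 u hu
    have h1 := hnahm 1 u hu
    have h2 := hnahm 2 u hu
    have hs0 : (1 / 2 : ℂ) • ∑ j : Fin 3, ∑ k : Fin 3,
        (eps 0 j k : ℂ) • (T j u * T k u - T k u * T j u)
        = T 1 u * T 2 u - T 2 u * T 1 u := by
      simp only [Fin.sum_univ_three]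
      norm_num [eps]
      module
    have hs1 : (1 / 2 : ℂ) • ∑ j : Fin 3, ∑ k : Fin 3,
        (eps 1 j k : ℂ) • (T j u * T k u - T k u * T j u)
        = T 2 u * T 0 u - T 0 u * T 2 u := by
      simp only [Fin.sum_univ_three]
      norm_num [eps]
      module
    have hs2 : (1 / 2 : ℂ) • ∑ j : Fin 3, ∑ k : Fin 3,
        (eps 2 j k : ℂ) • (T j u * T k u - T k u * T j u)
        = T 0 u * T 1 u - T 1 u * T 0 u := by
      simp only [Fin.sum_univ_three]
      norm_num [eps]
      module
    rw [hs0] at h0; rw [hs1] at h1; rw [hs2] at h2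
    have e0 := eq_sub_of_add_eq h0
    have e1 := eq_sub_of_add_eq h1
    have e2 := eq_sub_of_add_eq h2
    rw [hZ]
    simp only [e0, e1, e2, Tz, hB]
    simp only [Matrix.mul_add, Matrix.add_mul, Matrix.mul_sub, Matrix.sub_mul,
      Matrix.mul_smul, Matrix.smul_mul, smul_smul, smul_add, smul_sub]
    match_scalars <;> (try ring_nf; try simp only [Complex.I_sq]; try ring)
  -- the derivative of the characteristic polynomial vanishes
  have hderiv : ∀ u ∈ I, HasDerivWithinAt
      (fun v => (η • (1 : Matrix (Fin N) (Fin N) ℂ) - Complex.I • Tz T ζ v).det) 0 I u := by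
    intro u hu
    set Mu : ℝ → Matrix (Fin N) (Fin N) ℂ :=
      fun v => η • (1 : Matrix (Fin N) (Fin N) ℂ) - Complex.I • Tz T ζ v with hMu
    have hM : HasDerivWithinAt Mu (-(Complex.I • Z u)) I u :=
      ((hTz u hu).const_smul Complex.I).const_sub _
    have hdet : HasDerivWithinAt (fun v => (Mu v).det)
        (Matrix.trace ((Mu u).adjugate * (-(Complex.I • Z u)))) I u :=
      hasDerivWithinAt_det (fun a b => hM.matrix_entry a b)
    have hzero : Matrix.trace ((Mu u).adjugate * (-(Complex.I • Z u))) = 0 := by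
      have hbr : -(Complex.I • Z u) = Mu u * B u - B u * Mu u := by
        rw [hlax u hu, hMu]
        simp only [Matrix.sub_mul, Matrix.mul_sub, Matrix.smul_mul, Matrix.mul_smul,
          smul_sub, Matrix.one_mul, Matrix.mul_one]
        abel
      rw [hbr]
      exact trace_adj_comm _ _
    rw [hzero] at hdet
    exact hdet
  -- conclude by the mean value inequality on the convex set `I`
  have hbound := Convex.norm_image_sub_le_of_norm_hasFDerivWithin_le
    (f := fun v => (η • (1 : Matrix (Fin N) (Fin N) ℂ) - Complex.I • Tz T ζ v).det)
    (f' := fun _ => (0 : ℝ →L[ℝ] ℂ)) (C := 0)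
    (fun u hu => by
      have h := (hderiv u hu).hasFDerivWithinAt
      have e : (ContinuousLinearMap.toSpanSingleton ℝ (0 : ℂ)) = 0 := by
        ext x
        simp
      rwa [e] at h) (fun u hu => by simp)
    hI ht hs
  have h0 : (η • (1 : Matrix (Fin N) (Fin N) ℂ) - Complex.I • Tz T ζ s).det
      - (η • (1 : Matrix (Fin N) (Fin N) ℂ) - Complex.I • Tz T ζ t).det = 0 := by
    have hb : ‖(η • (1 : Matrix (Fin N) (Fin N) ℂ) - Complex.I • Tz T ζ s).det
        - (η • (1 : Matrix (Fin N) (Fin N) ℂ) - Complex.I • Tz T ζ t).det‖ ≤ 0 := by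
      simpa using hbound
    exact norm_le_zero_iff.mp hb
  exact sub_eq_zero.mp h0
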